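/- Let X_1, ..., X_n be Boolean random variables such that for every subset S ⊆ {1,...,n}, Pr[∀ i ∈ S, X_i = 1] ≤ δ^{|S|} for some δ ∈ [0,1]. Then for every γ with δ ≤ γ ≤ 1, Pr[∑ X_i ≥ γn] ≤ e^{-2n(γ-δ)²}. -/

import Mathlib

open MeasureTheory Real Finset

open scoped Classical in
lemma meas_toReal_eq_sum {Ω : Type*} [Fintype Ω] [MeasurableSpace Ω]
    [MeasurableSingletonClass Ω] (μ : Measure Ω) [IsFiniteMeasure μ] (s : Set Ω) :
    (μ s).toReal = ∑ ω ∈ Finset.univ.filter (fun ω => ω ∈ s), (μ {ω}).toReal := by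
  rw [← ENNReal.toReal_sum (fun a _ => (measure_lt_top μ _).ne)]
  congr 1
  rw [← measure_biUnion_finset]
  · congr 1; ext x; simp
  · intro i _ j _ hij
    simp [Function.onFun, Set.disjoint_singleton, hij]
  · exact fun i _ => measurableSet_singleton i

lemma log_le_neg_two_sq {x : ℝ} (hx : 0 < x) (hx1 : x ≤ 1) :
    Real.log x ≤ -(2*(1-x)^2) := by
  set F : ℝ → ℝ := fun y => Real.log y + 2*(1-y)^2 with hF
  have hFd : ∀ y : ℝ, 0 < y → HasDerivAt F (1/y - 4*(1-y)) y := by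
    intro y hy
    have h1 : HasDerivAt (fun z : ℝ => Real.log z) (1/y) y := by
      simpa [one_div] using Real.hasDerivAt_log hy.ne'
    have h2 : HasDerivAt (fun z : ℝ => 2*(1-z)^2) (-4*(1-y)) y := by
      have : HasDerivAt (fun z : ℝ => (1-z)^2) (2*(1-y)^1 * (-1)) y :=
        ((hasDerivAt_id y).const_sub 1).pow 2
      have := this.const_mul 2
      refine this.congr_deriv ?_
      ring
    have := h1.add h2
    refine this.congr_deriv ?_
    ring
  have hmono : MonotoneOn F (Set.Icc x 1) := by
    apply monotoneOn_of_deriv_nonneg (convex_Icc x 1)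
    · intro y hy
      exact (hFd y (lt_of_lt_of_le hx hy.1)).continuousAt.continuousWithinAt
    · intro y hy
      rw [interior_Icc] at hy
      exact ((hFd y (lt_trans hx hy.1)).differentiableAt).differentiableWithinAt
    · intro y hy
      rw [interior_Icc] at hy
      have hy0 : 0 < y := lt_trans hx hy.1
      rw [(hFd y hy0).deriv]
      have key : 1/y - 4*(1-y) = (1-2*y)^2/y := by field_simp; ring
      rw [key]
      positivity
  have h01 := hmono (Set.left_mem_Icc.2 hx1) (Set.right_mem_Icc.2 hx1) hx1
  have hF1 : F 1 = 0 := by simp [hF]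
  simp only [hF] at h01
  simp only [Real.log_one] at h01
  linarith


lemma pinsker_bernoulli {a b : ℝ} (ha : 0 < a) (hab : a ≤ b) (hb : b < 1) :
    2*(b-a)^2 ≤ b*(log b - log a) + (1-b)*(log (1-b) - log (1-a)) := by
  set G : ℝ → ℝ := fun y => (log y - log a) - (log (1-y) - log (1-a)) - 4*(y-a) with hG
  set F : ℝ → ℝ := fun y => y*(log y - log a) + (1-y)*(log (1-y) - log (1-a)) - 2*(y-a)^2 with hF
  have hsub : Set.Icc a b ⊆ Set.Ioo 0 1 := fun x hx =>
    ⟨lt_of_lt_of_le ha hx.1, lt_of_le_of_lt hx.2 hb⟩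
  have hGd : ∀ x ∈ Set.Ioo (0:ℝ) 1, HasDerivAt G (1/x + 1/(1-x) - 4) x := by
    intro x hx
    have hx0 : 0 < x := hx.1
    have hx1 : 0 < 1 - x := by linarith [hx.2]
    have h1 : HasDerivAt (fun y : ℝ => log y - log a) (1/x) x := by
      simpa [one_div] using (Real.hasDerivAt_log hx0.ne').sub_const (log a)
    have h2 : HasDerivAt (fun y : ℝ => log (1-y) - log (1-a)) (-(1/(1-x))) x := by
      have hc : HasDerivAt (fun y : ℝ => 1 - y) (-1) x := (hasDerivAt_id x).const_sub 1
      have := (Real.hasDerivAt_log hx1.ne').comp x hc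
      have := this.sub_const (log (1-a))
      refine this.congr_deriv ?_
      field_simp
    have h3 : HasDerivAt (fun y : ℝ => 4*(y-a)) 4 x := by
      have := ((hasDerivAt_id x).sub_const a).const_mul 4
      simpa using this
    have := (h1.sub h2).sub h3
    refine this.congr_deriv ?_
    ring
  have hFd : ∀ x ∈ Set.Ioo (0:ℝ) 1, HasDerivAt F (G x) x := by
    intro x hx
    have hx0 : 0 < x := hx.1
    have hx1 : 0 < 1 - x := by linarith [hx.2]
    have h1 : HasDerivAt (fun y : ℝ => y*(log y - log a)) ((log x - log a) + 1) x := by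
      have := (hasDerivAt_id x).mul ((Real.hasDerivAt_log hx0.ne').sub_const (log a))
      refine this.congr_deriv ?_
      field_simp
      simp only [id_eq]
      ring
    have h2 : HasDerivAt (fun y : ℝ => (1-y)*(log (1-y) - log (1-a)))
        (-(log (1-x) - log (1-a)) - 1) x := by
      have hc : HasDerivAt (fun y : ℝ => 1 - y) (-1) x := (hasDerivAt_id x).const_sub 1
      have hl : HasDerivAt (fun y : ℝ => log (1-y) - log (1-a)) (1/(1-x) * (-1)) x := by
        have := ((Real.hasDerivAt_log hx1.ne').comp x hc).sub_const (log (1-a))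
        refine this.congr_deriv ?_
        simp [Function.comp]
      have := hc.mul hl
      refine this.congr_deriv ?_
      field_simp
      ring
    have h3 : HasDerivAt (fun y : ℝ => 2*(y-a)^2) (4*(x-a)) x := by
      have h := (((hasDerivAt_id x).sub_const a).pow 2).const_mul (2:ℝ)
      refine h.congr_deriv ?_
      simp only [id_eq, pow_one, Nat.cast_ofNat]
      ring
    have := (h1.add h2).sub h3
    refine this.congr_deriv ?_
    simp only [hG]
    ring
  have hGmono : MonotoneOn G (Set.Icc a b) := by
    apply monotoneOn_of_deriv_nonneg (convex_Icc a b)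
    · intro y hy
      exact (hGd y (hsub hy)).continuousAt.continuousWithinAt
    · intro y hy
      rw [interior_Icc] at hy
      exact ((hGd y (hsub (Set.Ioo_subset_Icc_self hy))).differentiableAt).differentiableWithinAt
    · intro y hy
      rw [interior_Icc] at hy
      have hy' := hsub (Set.Ioo_subset_Icc_self hy)
      rw [(hGd y hy').deriv]
      have hy0 : 0 < y := hy'.1
      have hy1 : 0 < 1 - y := by linarith [hy'.2]
      have key : 1/y + 1/(1-y) - 4 = (2*y-1)^2/(y*(1-y)) := by field_simp; ring
      rw [key]
      positivity
  have hGnonneg : ∀ x ∈ Set.Icc a b, 0 ≤ G x := by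
    intro x hx
    have h2 := hGmono (Set.left_mem_Icc.2 hab) hx hx.1
    have hGa : G a = 0 := by simp [hG]
    linarith
  have hFmono : MonotoneOn F (Set.Icc a b) := by
    apply monotoneOn_of_deriv_nonneg (convex_Icc a b)
    · intro y hy
      exact (hFd y (hsub hy)).continuousAt.continuousWithinAt
    · intro y hy
      rw [interior_Icc] at hy
      exact ((hFd y (hsub (Set.Ioo_subset_Icc_self hy))).differentiableAt).differentiableWithinAt
    · intro y hy
      rw [interior_Icc] at hy
      rw [(hFd y (hsub (Set.Ioo_subset_Icc_self hy))).deriv]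
      exact hGnonneg y (Set.Ioo_subset_Icc_self hy)
  have h2 := hFmono (Set.left_mem_Icc.2 hab) (Set.right_mem_Icc.2 hab) hab
  have hFa : F a = 0 := by simp [hF]
  simp only [hF] at h2
  rw [hF] at hFa
  simp only at hFa
  linarith

theorem impagliazzo_kabanets_quadratic
    {Ω : Type*} [Fintype Ω] [MeasurableSpace Ω] [MeasurableSingletonClass Ω]
    (μ : Measure Ω) [IsProbabilityMeasure μ] (n : ℕ)
    (X : Fin n → Ω → ℕ) (hX : ∀ i ω, X i ω = 0 ∨ X i ω = 1)
    (δ : ℝ) (hδ0 : 0 ≤ δ) (hδ1 : δ ≤ 1)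
    (h : ∀ S : Finset (Fin n),
      (μ {ω | ∀ i ∈ S, X i ω = 1}).toReal ≤ δ ^ S.card)
    (γ : ℝ) (hγl : δ ≤ γ) (hγu : γ ≤ 1) :
    (μ {ω | γ * n ≤ ∑ i, (X i ω : ℝ)}).toReal ≤
      Real.exp (-2 * n * (γ - δ) ^ 2) := by
  classical
  set E : Set Ω := {ω | γ * n ≤ ∑ i, (X i ω : ℝ)} with hE
  have hp1 : (μ E).toReal ≤ 1 := by
    rw [← ENNReal.toReal_one]
    exact ENNReal.toReal_mono ENNReal.one_ne_top prob_le_one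
  rcases eq_or_lt_of_le hγl with hγδ | hγδ
  · have he : -2 * (n:ℝ) * (γ - δ)^2 = 0 := by rw [← hγδ]; ring
    rw [he, Real.exp_zero]; exact hp1
  rcases Nat.eq_zero_or_pos n with hn | hn
  · have he : -2 * (n:ℝ) * (γ - δ)^2 = 0 := by rw [hn]; simp
    rw [he, Real.exp_zero]; exact hp1
  -- helper facts
  have hones : ∀ ω, ∑ i, (X i ω : ℝ) = ((Finset.univ.filter (fun i => X i ω = 1)).card : ℝ) := by
    intro ω
    rw [Finset.card_filter]
    push_cast
    apply Finset.sum_congr rfl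
    intro i _
    rcases hX i ω with h0 | h0 <;> simp [h0]
  rcases eq_or_lt_of_le hδ0 with hδ | hδ
  · -- δ = 0
    have hE0 : μ E = 0 := by
      have hsub : E ⊆ ⋃ i : Fin n, {ω | ∀ j ∈ ({i} : Finset (Fin n)), X j ω = 1} := by
        intro ω hω
        have hω' : γ * n ≤ ∑ i, (X i ω : ℝ) := hω
        by_contra hc
        simp only [Set.mem_iUnion, Set.mem_setOf_eq, Finset.mem_singleton, not_exists] at hc
        have hz : ∀ i, X i ω = 0 := by
          intro i
          rcases hX i ω with h0 | h1
          · exact h0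
          · exact absurd (fun j hj => hj ▸ h1) (hc i)
        have : ∑ i, (X i ω : ℝ) = 0 := by simp [hz]
        rw [this] at hω'
        have : (0:ℝ) < γ * n := by
          apply mul_pos (by linarith) (by exact_mod_cast hn)
        linarith
      have hle2 : μ E ≤ ∑ i : Fin n, μ {ω | ∀ j ∈ ({i} : Finset (Fin n)), X j ω = 1} :=
        le_trans (measure_mono hsub)
          (measure_iUnion_fintype_le μ (fun i => {ω | ∀ j ∈ ({i} : Finset (Fin n)), X j ω = 1}))
      have hzero : ∀ i : Fin n, μ {ω | ∀ j ∈ ({i} : Finset (Fin n)), X j ω = 1} = 0 := by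
        intro i
        have := h {i}
        rw [Finset.card_singleton, ← hδ] at this
        simp only [pow_one] at this
        have hnn : (0:ℝ) ≤ (μ {ω | ∀ j ∈ ({i} : Finset (Fin n)), X j ω = 1}).toReal :=
          ENNReal.toReal_nonneg
        have heq : (μ {ω | ∀ j ∈ ({i} : Finset (Fin n)), X j ω = 1}).toReal = 0 := le_antisymm this hnn
        rcases (ENNReal.toReal_eq_zero_iff _).1 heq with h0 | htop
        · exact h0
        · exact absurd htop (measure_ne_top μ _)
      rw [Finset.sum_eq_zero (fun i _ => hzero i)] at hle2
      exact le_antisymm hle2 zero_le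
    rw [hE0]
    simp only [ENNReal.toReal_zero]
    exact (Real.exp_pos _).le
  rcases eq_or_lt_of_le hγu with hγ1 | hγ1
  · -- γ = 1
    have hkn : ∀ ω, (Finset.univ.filter (fun i => X i ω = 1)).card ≤ n := by
      intro ω
      simpa using Finset.card_le_card (Finset.filter_subset (fun i => X i ω = 1) Finset.univ)
    have hsub : E ⊆ {ω | ∀ i ∈ (Finset.univ : Finset (Fin n)), X i ω = 1} := by
      intro ω hω
      have hω' : γ * n ≤ ∑ i, (X i ω : ℝ) := hω
      rw [hones ω, hγ1, one_mul] at hω'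
      have hcard : (Finset.univ.filter (fun i => X i ω = 1)).card = n := by
        have := hkn ω
        have : (n:ℝ) ≤ ((Finset.univ.filter (fun i => X i ω = 1)).card : ℝ) := hω'
        exact_mod_cast le_antisymm (hkn ω) (by exact_mod_cast hω')
      have hfull : Finset.univ.filter (fun i => X i ω = 1) = Finset.univ :=
        Finset.eq_univ_of_card _ (by simpa using hcard)
      intro i _
      have hi : i ∈ Finset.univ.filter (fun i => X i ω = 1) := by rw [hfull]; exact Finset.mem_univ i
      exact (Finset.mem_filter.1 hi).2
    have hple : (μ E).toReal ≤ δ ^ n := by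
      refine le_trans (ENNReal.toReal_mono (measure_ne_top μ _) (measure_mono hsub)) ?_
      simpa using h Finset.univ
    refine le_trans hple ?_
    have hδn : δ ^ n = Real.exp ((n:ℝ) * Real.log δ) := by
      have h1 : δ ^ n = Real.exp (Real.log δ) ^ n := by rw [Real.exp_log hδ]
      rw [h1, ← Real.exp_nat_mul]
    rw [hδn]
    apply Real.exp_le_exp.2
    have hlog := log_le_neg_two_sq hδ hδ1
    have hn' : (0:ℝ) ≤ (n:ℝ) := Nat.cast_nonneg n
    have := mul_le_mul_of_nonneg_left hlog hn'
    calc (n:ℝ) * Real.log δ ≤ (n:ℝ) * (-(2*(1-δ)^2)) := this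
      _ = -2 * n * (γ - δ)^2 := by rw [← hγ1]; ring
  -- main case : 0 < δ < γ < 1, 0 < n
  set q : ℝ := (γ - δ) / (γ * (1 - δ)) with hq
  have hγ0 : 0 < γ := lt_trans hδ hγδ
  have h1δ : 0 < 1 - δ := by linarith
  have h1γ : 0 < 1 - γ := by linarith
  have hq0 : 0 < q := div_pos (by linarith) (mul_pos hγ0 h1δ)
  have h1q : 1 - q = δ * (1 - γ) / (γ * (1 - δ)) := by
    rw [hq]; field_simp; ring
  have hr0 : 0 < 1 - q := by rw [h1q]; positivity
  have hr1 : 1 - q ≤ 1 := by linarith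
  have hqδ : q * δ + (1 - q) = δ / γ := by
    rw [hq]; field_simp; ring
  set P : Ω → ℝ := fun ω => (μ {ω}).toReal with hP
  have hPnn : ∀ ω, 0 ≤ P ω := fun ω => ENNReal.toReal_nonneg
  set ones : Ω → Finset (Fin n) := fun ω => Finset.univ.filter (fun i => X i ω = 1) with honesdef
  have hkn : ∀ ω, (ones ω).card ≤ n := fun ω => by
    simpa using Finset.card_le_card (Finset.filter_subset (fun i => X i ω = 1) Finset.univ)
  have hB : ∀ T : Finset (Fin n),
      ∑ S ∈ T.powerset, q^S.card * (1-q)^(n - S.card) = (1-q)^(n - T.card) := by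
    intro T
    have hTn : T.card ≤ n := by simpa using Finset.card_le_card (Finset.subset_univ T)
    have h1 : ∀ S ∈ T.powerset, q^S.card * (1-q)^(n - S.card)
        = (q^S.card * (1-q)^(T.card - S.card)) * (1-q)^(n - T.card) := by
      intro S hS
      have hSc : S.card ≤ T.card := Finset.card_le_card (Finset.mem_powerset.1 hS)
      rw [mul_assoc, ← pow_add]
      congr 2
      omega
    rw [Finset.sum_congr rfl h1, ← Finset.sum_mul]
    have hpa := Finset.prod_add (fun _ : Fin n => q) (fun _ : Fin n => (1-q)) T
    simp only [Finset.prod_const] at hpa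
    have h2 : ∑ S ∈ T.powerset, q^S.card * (1-q)^(T.card - S.card) = 1 := by
      calc ∑ S ∈ T.powerset, q^S.card * (1-q)^(T.card - S.card)
          = ∑ S ∈ T.powerset, q^S.card * (1-q)^((T \ S).card) := by
            apply Finset.sum_congr rfl
            intro S hS
            rw [Finset.card_sdiff_of_subset (Finset.mem_powerset.1 hS)]
        _ = (q + (1-q))^T.card := hpa.symm
        _ = 1 := by norm_num
    rw [h2, one_mul]
  have hBin : ∑ S : Finset (Fin n), (q*δ)^S.card * (1-q)^(n - S.card) = (q*δ + (1-q))^n := by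
    have hpa := Finset.prod_add (fun _ : Fin n => q*δ) (fun _ : Fin n => (1-q)) Finset.univ
    simp only [Finset.prod_const] at hpa
    rw [Finset.card_univ, Fintype.card_fin] at hpa
    calc ∑ S : Finset (Fin n), (q*δ)^S.card * (1-q)^(n - S.card)
        = ∑ S ∈ (Finset.univ : Finset (Fin n)).powerset, (q*δ)^S.card * (1-q)^((Finset.univ \ S).card) := by
          rw [Finset.powerset_univ]
          apply Finset.sum_congr rfl
          intro S _
          congr 2
          rw [Finset.card_sdiff_of_subset (Finset.subset_univ S), Finset.card_univ, Fintype.card_fin]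
      _ = (q*δ + (1-q))^n := hpa.symm
  have hμS : ∀ S : Finset (Fin n),
      (μ {ω | ∀ i ∈ S, X i ω = 1}).toReal
        = ∑ ω ∈ Finset.univ.filter (fun ω => S ⊆ ones ω), P ω := by
    intro S
    rw [meas_toReal_eq_sum]
    apply Finset.sum_congr _ (fun _ _ => rfl)
    ext ω
    simp only [Finset.mem_filter, Finset.mem_univ, true_and, Set.mem_setOf_eq, honesdef]
    constructor
    · intro hall i hi
      exact Finset.mem_filter.2 ⟨Finset.mem_univ i, hall i hi⟩
    · intro hsub i hi
      exact (Finset.mem_filter.1 (hsub hi)).2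
  set k : Ω → ℕ := fun ω => (ones ω).card with hk
  set A : ℝ := ∑ ω : Ω, P ω * (1-q)^(n - k ω) with hA
  have hAS : A = ∑ S : Finset (Fin n), q^S.card * (1-q)^(n - S.card) *
      ∑ ω ∈ Finset.univ.filter (fun ω => S ⊆ ones ω), P ω := by
    calc A = ∑ ω : Ω, P ω * ∑ S ∈ (ones ω).powerset, q^S.card * (1-q)^(n - S.card) := by
          apply Finset.sum_congr rfl
          intro ω _
          rw [hB (ones ω)]
      _ = ∑ ω : Ω, ∑ S : Finset (Fin n),
            if S ⊆ ones ω then P ω * (q^S.card * (1-q)^(n - S.card)) else 0 := by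
          apply Finset.sum_congr rfl
          intro ω _
          rw [Finset.mul_sum, ← Finset.sum_filter]
          apply Finset.sum_congr _ (fun _ _ => rfl)
          ext S
          simp [Finset.mem_powerset]
      _ = ∑ S : Finset (Fin n), ∑ ω : Ω,
            if S ⊆ ones ω then P ω * (q^S.card * (1-q)^(n - S.card)) else 0 :=
          Finset.sum_comm
      _ = _ := by
          apply Finset.sum_congr rfl
          intro S _
          rw [← Finset.sum_filter, Finset.mul_sum]
          exact Finset.sum_congr rfl (fun ω _ => mul_comm _ _)
  have hupper : A ≤ (δ/γ)^n := by
    rw [hAS, ← hqδ, ← hBin]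
    apply Finset.sum_le_sum
    intro S _
    have hw : 0 ≤ q^S.card * (1-q)^(n - S.card) := by positivity
    have hbound : ∑ ω ∈ Finset.univ.filter (fun ω => S ⊆ ones ω), P ω ≤ δ^S.card := by
      rw [← hμS S]; exact h S
    calc q^S.card * (1-q)^(n - S.card) * ∑ ω ∈ Finset.univ.filter (fun ω => S ⊆ ones ω), P ω
        ≤ q^S.card * (1-q)^(n - S.card) * δ^S.card := mul_le_mul_of_nonneg_left hbound hw
      _ = (q*δ)^S.card * (1-q)^(n - S.card) := by rw [mul_pow]; ring
  set c : ℝ := (1-q) ^ ((1-γ) * (n:ℝ)) with hc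
  have hcpos : 0 < c := Real.rpow_pos_of_pos hr0 _
  have hlower : (μ E).toReal * c ≤ A := by
    rw [meas_toReal_eq_sum μ E, Finset.sum_mul]
    calc ∑ ω ∈ Finset.univ.filter (fun ω => ω ∈ E), P ω * c
        ≤ ∑ ω ∈ Finset.univ.filter (fun ω => ω ∈ E), P ω * (1-q)^(n - k ω) := by
          apply Finset.sum_le_sum
          intro ω hω
          have hωE : ω ∈ E := (Finset.mem_filter.1 hω).2
          have hγk : γ * n ≤ (k ω : ℝ) := by
            have h' : γ * n ≤ ∑ i, (X i ω : ℝ) := hωE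
            rwa [hones ω] at h'
          have hexp : ((n - k ω : ℕ) : ℝ) ≤ (1-γ) * n := by
            rw [Nat.cast_sub (hkn ω)]
            nlinarith
          have hmono := Real.rpow_le_rpow_of_exponent_ge hr0 hr1 hexp
          rw [Real.rpow_natCast] at hmono
          exact mul_le_mul_of_nonneg_left hmono (hPnn ω)
      _ ≤ A := by
          rw [hA]
          apply Finset.sum_le_sum_of_subset_of_nonneg (Finset.filter_subset _ _)
          exact fun ω _ _ => mul_nonneg (hPnn ω) (by positivity)
  have hmain : (μ E).toReal * c ≤ (δ/γ)^n := le_trans hlower hupper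
  have hfinal : (δ/γ)^n ≤ Real.exp (-2 * n * (γ-δ)^2) * c := by
    have hδγpos : 0 < δ/γ := div_pos hδ hγ0
    have e1 : (δ/γ)^n = Real.exp ((n:ℝ) * Real.log (δ/γ)) := by
      have h1 : (δ/γ)^n = Real.exp (Real.log (δ/γ)) ^ n := by rw [Real.exp_log hδγpos]
      rw [h1, ← Real.exp_nat_mul]
    have e2 : c = Real.exp (((1-γ)*(n:ℝ)) * Real.log (1-q)) := by
      rw [hc, Real.rpow_def_of_pos hr0, mul_comm]
    rw [e1, e2, ← Real.exp_add]
    apply Real.exp_le_exp.2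
    have hlq : Real.log (1-q) = Real.log δ + Real.log (1-γ) - Real.log γ - Real.log (1-δ) := by
      rw [h1q, Real.log_div (by positivity) (by positivity),
        Real.log_mul hδ.ne' h1γ.ne', Real.log_mul hγ0.ne' h1δ.ne']
      ring
    have hldg : Real.log (δ/γ) = Real.log δ - Real.log γ := Real.log_div hδ.ne' hγ0.ne'
    have hpin := pinsker_bernoulli hδ hγδ.le hγ1
    rw [hldg, hlq]
    have hnn : (0:ℝ) ≤ (n:ℝ) := Nat.cast_nonneg n
    nlinarith [mul_le_mul_of_nonneg_left hpin hnn]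
  have hfin2 : (μ E).toReal * c ≤ Real.exp (-2 * n * (γ-δ)^2) * c := le_trans hmain hfinal
  exact le_of_mul_le_mul_right hfin2 hcpos
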